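/- arXiv:math/0004034 — 2 statements merged into one kernel-verified Lean document; each statement's English description precedes it below -/
import Mathlib

section
/- Semisimplicity of the fusion algebra: the ℂ-algebra A with basis {Φ_λ}_{λ∈I} and product Φ_λ ⋆ Φ_μ = Σ_{ν∈I} N_{λμ}^ν Φ_ν and unit Φ_Ω is isomorphic, via the linear extension of Φ_λ ↦ (S_{λρ}/S_{Ωρ})_{ρ∈I}, to the function algebra ℂ^I with pointwise multiplication; in particular A is a commutative semisimple ring. -/
/-- Semisimplicity of the fusion algebra: the ℂ-algebra with basis
`{Φ_λ}` and product `Φ_λ ⋆ Φ_μ = Σ_ν N_{λμ}^ν Φ_ν` and unit `Φ_Ω` is isomorphic,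
via the linear extension of `Φ_λ ↦ (S_{λρ}/S_{Ωρ})_ρ`, to the function algebra
`ℂ^I` with pointwise multiplication; in particular it is a commutative
semisimple ring. -/
theorem fusion_algebra_semisimple {I : Type*} [Fintype I] [DecidableEq I] (Ω : I)
    (S : Matrix I I ℂ)
    (hsym : ∀ l m : I, S l m = S m l)
    (huni : S * S.conjTranspose = 1)
    (hpos : ∀ ρ : I, ∃ r : ℝ, 0 < r ∧ S Ω ρ = (r : ℂ))
    (N : I → I → I → ℂ)
    (hN : ∀ l m n : I, N l m n =
      ∑ ρ : I, S l ρ * S m ρ * (starRingEnd ℂ) (S n ρ) / S Ω ρ)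
    -- the fusion product on `ℂ^I`, written in coordinates w.r.t. the basis `{Φ_λ}`
    (star : (I → ℂ) → (I → ℂ) → (I → ℂ))
    (hstar : ∀ f g : I → ℂ, ∀ ν : I, star f g ν = ∑ l : I, ∑ m : I, f l * g m * N l m ν) :
    ∃ E : (I → ℂ) ≃ₗ[ℂ] (I → ℂ),
      (∀ l : I, E (Pi.single l 1) = fun ρ : I => S l ρ / S Ω ρ) ∧
      E (Pi.single Ω 1) = 1 ∧
      (∀ f g : I → ℂ, E (star f g) = E f * E g) ∧
      (∀ f g : I → ℂ, star f g = star g f) := by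
  have hne : ∀ ρ : I, S Ω ρ ≠ 0 := by
    intro ρ
    obtain ⟨r, hr, h⟩ := hpos ρ
    rw [h]
    exact_mod_cast hr.ne'
  have horth : ∀ ρ σ : I, (∑ l : I, S ρ l * (starRingEnd ℂ) (S σ l))
      = if ρ = σ then 1 else 0 := by
    intro ρ σ
    have := congrFun (congrFun huni ρ) σ
    simpa [Matrix.mul_apply, Matrix.conjTranspose_apply, Matrix.one_apply] using this
  have horth' : ∀ ρ σ : I, (∑ ν : I, (starRingEnd ℂ) (S ν σ) * S ν ρ)
      = if ρ = σ then 1 else 0 := by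
    intro ρ σ
    rw [← horth ρ σ]
    refine Finset.sum_congr rfl fun ν _ => ?_
    rw [hsym ν σ, hsym ν ρ, mul_comm]
  set T : (I → ℂ) → (I → ℂ) := fun f ρ => (∑ l : I, f l * S l ρ) / S Ω ρ with hT
  set U : (I → ℂ) → (I → ℂ) := fun g l =>
    ∑ ρ : I, (starRingEnd ℂ) (S l ρ) * S Ω ρ * g ρ with hU
  have hleft : ∀ f, U (T f) = f := by
    intro f
    funext l
    have : U (T f) l = ∑ ρ : I, (starRingEnd ℂ) (S l ρ) * (∑ m : I, f m * S m ρ) := by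
      refine Finset.sum_congr rfl fun ρ _ => ?_
      simp only [hT]
      rw [mul_assoc, mul_div_cancel₀ _ (hne ρ)]
    rw [this]
    have : (∑ ρ : I, (starRingEnd ℂ) (S l ρ) * (∑ m : I, f m * S m ρ))
        = ∑ m : I, f m * ∑ ρ : I, S m ρ * (starRingEnd ℂ) (S l ρ) := by
      simp only [Finset.mul_sum]
      rw [Finset.sum_comm]
      refine Finset.sum_congr rfl fun m _ => Finset.sum_congr rfl fun ρ _ => by ring
    rw [this]
    simp [horth]
  have hright : ∀ g, T (U g) = g := by
    intro g
    funext ρ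
    have h1 : (∑ l : I, U g l * S l ρ)
        = ∑ σ : I, (S Ω σ * g σ) * ∑ l : I, (starRingEnd ℂ) (S l σ) * S l ρ := by
      simp only [hU, Finset.sum_mul]
      rw [Finset.sum_comm]
      refine Finset.sum_congr rfl fun σ _ => ?_
      rw [Finset.mul_sum]
      refine Finset.sum_congr rfl fun l _ => by ring
    have h2 : (∑ l : I, U g l * S l ρ) = S Ω ρ * g ρ := by
      rw [h1]
      have : ∀ σ : I, (∑ l : I, (starRingEnd ℂ) (S l σ) * S l ρ)
          = if ρ = σ then 1 else 0 := fun σ => horth' ρ σ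
      simp only [this, mul_ite, mul_one, mul_zero]
      simp
    simp only [hT, h2]
    exact mul_div_cancel_left₀ (g ρ) (hne ρ)
  refine ⟨⟨⟨⟨T, ?_⟩, ?_⟩, U, hleft, hright⟩, ?_, ?_, ?_, ?_⟩
  · intro f g
    funext ρ
    simp only [hT, Pi.add_apply]
    rw [← add_div]
    congr 1
    rw [← Finset.sum_add_distrib]
    exact Finset.sum_congr rfl fun l _ => by ring
  · intro c f
    funext ρ
    simp only [hT, Pi.smul_apply, smul_eq_mul, RingHom.id_apply]
    have h3 : (∑ x : I, c * f x * S x ρ) = c * ∑ x : I, f x * S x ρ := by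
      rw [Finset.mul_sum]
      exact Finset.sum_congr rfl fun x _ => by ring
    rw [h3, mul_div_assoc]
  · intro l
    funext ρ
    simp only [LinearEquiv.coe_mk, LinearMap.coe_mk, AddHom.coe_mk, hT]
    rw [Finset.sum_eq_single l]
    · simp
    · intro m _ hm; simp [Pi.single_apply, hm]
    · simp
  · funext ρ
    simp only [LinearEquiv.coe_mk, LinearMap.coe_mk, AddHom.coe_mk, hT]
    rw [Finset.sum_eq_single Ω]
    · simp [div_self (hne ρ)]
    · intro m _ hm; simp [Pi.single_apply, hm]
    · simp
  · -- multiplicativity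
    intro f g
    have key : ∀ l m ρ : I, (∑ ν : I, N l m ν * S ν ρ) = S l ρ * S m ρ / S Ω ρ := by
      intro l m ρ
      have h1 : (∑ ν : I, N l m ν * S ν ρ)
          = ∑ σ : I, (S l σ * S m σ / S Ω σ) * ∑ ν : I, (starRingEnd ℂ) (S ν σ) * S ν ρ := by
        simp only [hN, Finset.sum_mul]
        rw [Finset.sum_comm]
        refine Finset.sum_congr rfl fun σ _ => ?_
        rw [Finset.mul_sum]
        refine Finset.sum_congr rfl fun ν _ => by ring
      rw [h1]
      simp only [horth', mul_ite, mul_one, mul_zero]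
      simp
    funext ρ
    simp only [LinearEquiv.coe_mk, LinearMap.coe_mk, AddHom.coe_mk, hT, Pi.mul_apply]
    have h2 : (∑ ν : I, star f g ν * S ν ρ)
        = ∑ l : I, ∑ m : I, f l * g m * (S l ρ * S m ρ / S Ω ρ) := by
      have : (∑ ν : I, star f g ν * S ν ρ)
          = ∑ l : I, ∑ m : I, f l * g m * ∑ ν : I, N l m ν * S ν ρ := by
        simp only [hstar, Finset.sum_mul]
        rw [Finset.sum_comm]
        refine Finset.sum_congr rfl fun l _ => ?_
        rw [Finset.sum_comm]
        refine Finset.sum_congr rfl fun m _ => ?_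
        rw [Finset.mul_sum]
        refine Finset.sum_congr rfl fun ν _ => by ring
      rw [this]
      exact Finset.sum_congr rfl fun l _ => Finset.sum_congr rfl fun m _ => by rw [key]
    rw [h2, div_mul_div_comm, Finset.sum_mul_sum]
    have h3 : (∑ l : I, ∑ m : I, f l * g m * (S l ρ * S m ρ / S Ω ρ))
        = (∑ l : I, ∑ m : I, f l * S l ρ * (g m * S m ρ)) / S Ω ρ := by
      rw [Finset.sum_div]
      refine Finset.sum_congr rfl fun l _ => ?_
      rw [Finset.sum_div]
      refine Finset.sum_congr rfl fun m _ => ?_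
      rw [mul_div_assoc]
      ring_nf
    rw [h3, div_div]
  · -- commutativity
    intro f g
    funext ν
    simp only [hstar]
    rw [Finset.sum_comm]
    refine Finset.sum_congr rfl fun m _ => Finset.sum_congr rfl fun l _ => ?_
    have hNc : N l m ν = N m l ν := by
      simp only [hN]
      exact Finset.sum_congr rfl fun ρ _ => by ring
    rw [hNc]
    ring
end

section
/- Factorization of Verlinde numbers under sewing two components: for all g₁,g₂ ∈ ℕ and all labels λ₁,…,λ_m, κ₁,…,κ_n ∈ I, Σ_{μ∈I} V_{g₁}(λ₁,…,λ_m,μ)·V_{g₂}(κ₁,…,κ_n,μ⁺) = V_{g₁+g₂}(λ₁,…,λ_m,κ₁,…,κ_n). -/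
/-- Factorization of Verlinde numbers under sewing two components:
`Σ_μ V_{g₁}(λ₁,…,λ_m,μ) · V_{g₂}(κ₁,…,κ_n,μ⁺) = V_{g₁+g₂}(λ₁,…,λ_m,κ₁,…,κ_n)`. -/
theorem verlinde_factorization_sewing {I : Type*} [Fintype I] [DecidableEq I] (Ω : I)
    (S : Matrix I I ℂ)
    (hsym : ∀ l m : I, S l m = S m l)
    (huni : S * S.conjTranspose = 1)
    (hpos : ∀ ρ : I, ∃ r : ℝ, 0 < r ∧ S Ω ρ = (r : ℂ))
    (N : I → I → I → ℂ)
    (hN : ∀ l m n : I, N l m n =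
      ∑ ρ : I, S l ρ * S m ρ * (starRingEnd ℂ) (S n ρ) / S Ω ρ)
    (plus : I → I)
    (hC : ∀ μ ν : I, (S * S) μ ν = if ν = plus μ then 1 else 0)
    (V : ℕ → (m : ℕ) → (Fin m → I) → ℂ)
    (hV : ∀ (g : ℕ) (m : ℕ) (lam : Fin m → I),
      V g m lam = ∑ ρ : I, (∏ i : Fin m, S (lam i) ρ / S Ω ρ) *
        ((‖S Ω ρ‖ : ℂ)) ^ ((2 : ℤ) - 2 * (g : ℤ))) :
    ∀ (g₁ g₂ : ℕ) (m n : ℕ) (lam : Fin m → I) (kap : Fin n → I),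
      ∑ μ : I, V g₁ (m + 1) (Fin.snoc lam μ) * V g₂ (n + 1) (Fin.snoc kap (plus μ)) =
        V (g₁ + g₂) (m + n) (Fin.append lam kap) := by
  -- S (plus μ) σ = conj (S μ σ)
  have hSC : S * S * S.conjTranspose = S := by
    rw [Matrix.mul_assoc, huni, Matrix.mul_one]
  have hconj : ∀ μ σ : I, S (plus μ) σ = (starRingEnd ℂ) (S μ σ) := by
    intro μ σ
    have h1 : ∑ ν, (S * S) μ ν * S.conjTranspose ν σ = S μ σ := by
      rw [← Matrix.mul_apply, hSC]
    have h2 : ∑ ν, (S * S) μ ν * S.conjTranspose ν σ = S.conjTranspose (plus μ) σ := by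
      simp only [hC, ite_mul, one_mul, zero_mul]
      simp
    rw [h2, Matrix.conjTranspose_apply] at h1
    have h3 : S σ (plus μ) = (starRingEnd ℂ) (S μ σ) := by
      have := congrArg star h1
      simpa using this
    rw [hsym, h3]
  have horth : ∀ ρ σ : I, ∑ μ, S μ ρ * S (plus μ) σ = if ρ = σ then 1 else 0 := by
    intro ρ σ
    have h1 : (S * S.conjTranspose) ρ σ = if ρ = σ then 1 else 0 := by
      rw [huni]; simp [Matrix.one_apply]
    rw [Matrix.mul_apply] at h1
    rw [← h1]
    refine Finset.sum_congr rfl fun μ _ => ?_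
    rw [hconj, hsym μ ρ, Matrix.conjTranspose_apply, hsym σ μ]
    rfl
  intro g₁ g₂ m n lam kap
  simp only [hV]
  have hprodL : ∀ (μ : I) (ρ : I), (∏ i : Fin (m+1), S ((Fin.snoc lam μ : Fin (m+1) → I) i) ρ / S Ω ρ)
      = (∏ i : Fin m, S (lam i) ρ / S Ω ρ) * (S μ ρ / S Ω ρ) := by
    intro μ ρ
    rw [Fin.prod_univ_castSucc]
    simp
  have hprodK : ∀ (μ : I) (ρ : I), (∏ i : Fin (n+1), S ((Fin.snoc kap μ : Fin (n+1) → I) i) ρ / S Ω ρ)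
      = (∏ i : Fin n, S (kap i) ρ / S Ω ρ) * (S μ ρ / S Ω ρ) := by
    intro μ ρ
    rw [Fin.prod_univ_castSucc]
    simp
  have hprodA : ∀ ρ : I, (∏ i : Fin (m+n), S ((Fin.append lam kap : Fin (m+n) → I) i) ρ / S Ω ρ)
      = (∏ i : Fin m, S (lam i) ρ / S Ω ρ) * (∏ i : Fin n, S (kap i) ρ / S Ω ρ) := by
    intro ρ
    rw [Fin.prod_univ_add]
    simp
  simp only [hprodL, hprodK, hprodA]
  set A : I → ℂ := fun ρ => ∏ i : Fin m, S (lam i) ρ / S Ω ρ with hA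
  set B : I → ℂ := fun ρ => ∏ i : Fin n, S (kap i) ρ / S Ω ρ with hB
  set F : ℕ → I → ℂ := fun g ρ => ((‖S Ω ρ‖ : ℂ)) ^ ((2 : ℤ) - 2 * (g : ℤ)) with hF
  calc
    ∑ μ : I, (∑ ρ : I, A ρ * (S μ ρ / S Ω ρ) * F g₁ ρ) *
        (∑ σ : I, B σ * (S (plus μ) σ / S Ω σ) * F g₂ σ)
      = ∑ ρ : I, ∑ σ : I, ∑ μ : I,
          (A ρ * (S μ ρ / S Ω ρ) * F g₁ ρ) * (B σ * (S (plus μ) σ / S Ω σ) * F g₂ σ) := by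
        simp only [Finset.sum_mul_sum]
        rw [Finset.sum_comm]
        exact Finset.sum_congr rfl fun ρ _ => Finset.sum_comm
    _ = ∑ ρ : I, ∑ σ : I,
          ((A ρ * F g₁ ρ / S Ω ρ) * (B σ * F g₂ σ / S Ω σ)) * (if ρ = σ then 1 else 0) := by
        refine Finset.sum_congr rfl fun ρ _ => Finset.sum_congr rfl fun σ _ => ?_
        rw [← horth ρ σ, Finset.mul_sum]
        exact Finset.sum_congr rfl fun μ _ => by ring
    _ = ∑ ρ : I, (A ρ * F g₁ ρ / S Ω ρ) * (B ρ * F g₂ ρ / S Ω ρ) := by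
        refine Finset.sum_congr rfl fun ρ _ => ?_
        simp [mul_ite, mul_one, mul_zero]
    _ = ∑ ρ : I, A ρ * B ρ * F (g₁ + g₂) ρ := by
        refine Finset.sum_congr rfl fun ρ _ => ?_
        obtain ⟨r, hr, hSr⟩ := hpos ρ
        have hr0 : (r : ℂ) ≠ 0 := by exact_mod_cast hr.ne'
        have habs : (‖S Ω ρ‖ : ℂ) = (r : ℂ) := by
          rw [hSr, Complex.norm_real, Real.norm_eq_abs, abs_of_pos hr]
        have hz : (r : ℂ) ^ ((2 : ℤ) - 2 * (g₁ : ℤ)) * (r : ℂ) ^ ((2 : ℤ) - 2 * (g₂ : ℤ))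
            = (r : ℂ) ^ ((2 : ℤ) - 2 * ((g₁ + g₂ : ℕ) : ℤ)) * r * r := by
          rw [← zpow_add₀ hr0]
          rw [show ((2 : ℤ) - 2 * (g₁ : ℤ)) + ((2 : ℤ) - 2 * (g₂ : ℤ))
              = ((2 : ℤ) - 2 * ((g₁ + g₂ : ℕ) : ℤ)) + 1 + 1 by push_cast; ring]
          rw [zpow_add₀ hr0, zpow_add₀ hr0, zpow_one]
        simp only [hF, habs, hSr]
        field_simp
        rw [Complex.norm_real, Real.norm_eq_abs, abs_of_pos hr]
        push_cast at hz ⊢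
        linear_combination A ρ * B ρ * hz
end
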